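/- arXiv:2010.07765 — 5 statements merged into one kernel-verified Lean document; each statement's English description precedes it below -/
import Mathlib

section
/- Let X be a finite set with pmf p on X × {0,1}, f : X → X̃, and suppose there exists a subset I ⊆ X with p(I) ≥ 1 − δ on which f is injective (f is 'δ-injective'). Then R*_{f(X)} − R*_X ≤ δ, i.e. f is δ-safe. -/
open Finset

/-- Feature marginal of a joint pmf on `X × {0,1}`. -/
noncomputable def marg {X : Type*} (p : X → Bool → ℝ) (x : X) : ℝ := p x false + p x true

/-- Conditional probability `p(y|x)`, with the convention that it is `0`
when the feature marginal vanishes. -/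
noncomputable def condP {X : Type*} (p : X → Bool → ℝ) (x : X) (y : Bool) : ℝ :=
  if marg p x = 0 then 0 else p x y / marg p x

/-- Bayes error `R*_X = ∑_x p(x) (1 - max_y p(y|x))`. -/
noncomputable def bayesError {X : Type*} [Fintype X] (p : X → Bool → ℝ) : ℝ :=
  ∑ x, marg p x * (1 - max (condP p x false) (condP p x true))

/-- Pushforward joint pmf under a deterministic map on the feature coordinate. -/
noncomputable def pushforward {X X' : Type*} [Fintype X] [DecidableEq X']
    (f : X → X') (p : X → Bool → ℝ) (x' : X') (y : Bool) : ℝ :=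
  ∑ x ∈ Finset.univ.filter (fun x => f x = x'), p x y

lemma bayesError_eq {X : Type*} [Fintype X] (p : X → Bool → ℝ) (hp : ∀ x y, 0 ≤ p x y) :
    bayesError p = ∑ x, (marg p x - max (p x false) (p x true)) := by
  unfold bayesError
  refine Finset.sum_congr rfl fun x _ => ?_
  by_cases h : marg p x = 0
  · have hm := h
    unfold marg at hm
    have h1 : p x false = 0 ∧ p x true = 0 := by
      constructor <;> nlinarith [hp x false, hp x true]
    rw [h, h1.1, h1.2]; simp
  · have hm : 0 < marg p x :=
      lt_of_le_of_ne (add_nonneg (hp x false) (hp x true)) (Ne.symm h)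
    simp only [condP, h, if_false]
    rw [max_div_div_right (le_of_lt hm)]
    field_simp

lemma sum_marg_eq {X : Type*} [Fintype X] (p : X → Bool → ℝ)
    (hsum : ∑ x, ∑ y, p x y = 1) : ∑ x, marg p x = 1 := by
  rw [← hsum]
  refine Finset.sum_congr rfl fun x _ => ?_
  rw [Fintype.sum_bool]; unfold marg; ring

/-- A δ-injective transformation is δ-safe. -/
theorem bayesError_pushforward_of_deltaInjective {X X' : Type*} [Fintype X] [Fintype X']
    [DecidableEq X'] (p : X → Bool → ℝ) (hp : ∀ x y, 0 ≤ p x y)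
    (hsum : ∑ x, ∑ y, p x y = 1) (f : X → X') (δ : ℝ) (hδ0 : 0 ≤ δ) (hδ1 : δ ≤ 1)
    (I : Finset X) (hinj : Set.InjOn f I) (hI : 1 - δ ≤ ∑ x ∈ I, marg p x) :
    bayesError (pushforward f p) - bayesError p ≤ δ := by
  classical
  set q := pushforward f p with hq
  have hq0 : ∀ x' y, 0 ≤ q x' y := fun x' y =>
    Finset.sum_nonneg fun x _ => hp x y
  -- marginal of pushforward
  have hmq : ∀ x', marg q x' = ∑ x ∈ Finset.univ.filter (fun x => f x = x'), marg p x := by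
    intro x'
    unfold marg
    rw [hq]; unfold pushforward
    rw [← Finset.sum_add_distrib]
  have hmargsum : ∑ x', marg q x' = ∑ x, marg p x := by
    rw [Finset.sum_congr rfl fun x' _ => hmq x']
    exact Finset.sum_fiberwise univ f (marg p)
  -- key: sum of maxes over I is at most sum of maxes of pushforward
  have key : ∑ x ∈ I, max (p x false) (p x true)
      ≤ ∑ x', max (q x' false) (q x' true) := by
    have hfib : ∑ x ∈ I, max (p x false) (p x true)
        = ∑ x', ∑ x ∈ I.filter (fun x => f x = x'), max (p x false) (p x true) :=
      (Finset.sum_fiberwise I f _).symm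
    rw [hfib]
    refine Finset.sum_le_sum fun x' _ => ?_
    rcases (I.filter (fun x => f x = x')).eq_empty_or_nonempty with he | ⟨x0, hx0⟩
    · rw [he, Finset.sum_empty]
      exact le_max_of_le_left (hq0 x' false)
    · have hx0I : x0 ∈ I := (Finset.mem_filter.mp hx0).1
      have hx0f : f x0 = x' := (Finset.mem_filter.mp hx0).2
      have hsingle : I.filter (fun x => f x = x') = {x0} := by
        ext z
        simp only [Finset.mem_filter, Finset.mem_singleton]
        constructor
        · rintro ⟨hz, hfz⟩
          exact hinj hz hx0I (hfz.trans hx0f.symm)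
        · rintro rfl; exact ⟨hx0I, hx0f⟩
      rw [hsingle, Finset.sum_singleton]
      have hle : ∀ y, p x0 y ≤ q x' y := by
        intro y
        refine Finset.single_le_sum (fun x _ => hp x y) ?_
        simp [hx0f]
      exact max_le_max (hle false) (hle true)
  -- rewrite bayes errors
  rw [bayesError_eq p hp, bayesError_eq q hq0]
  rw [Finset.sum_sub_distrib, Finset.sum_sub_distrib, hmargsum]
  have hcompl : ∑ x, max (p x false) (p x true)
      - ∑ x ∈ I, max (p x false) (p x true)
      = ∑ x ∈ univ \ I, max (p x false) (p x true) := by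
    rw [← Finset.sum_sdiff (Finset.subset_univ I) (f := fun x => max (p x false) (p x true))]
    ring
  have hmax_le_marg : ∀ x, max (p x false) (p x true) ≤ marg p x := by
    intro x
    unfold marg
    exact max_le (by linarith [hp x true]) (by linarith [hp x false])
  have h1 : ∑ x ∈ univ \ I, max (p x false) (p x true) ≤ ∑ x ∈ univ \ I, marg p x :=
    Finset.sum_le_sum fun x _ => hmax_le_marg x
  have h2 : ∑ x ∈ univ \ I, marg p x = 1 - ∑ x ∈ I, marg p x := by
    have := Finset.sum_sdiff (Finset.subset_univ I) (f := marg p)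
    rw [sum_marg_eq p hsum] at this
    linarith
  linarith [key, hcompl.symm.le, hcompl.le]
end

section
/- Let X, Y be finite sets with Y = {0,1}, p a joint pmf on X × Y with full-support feature marginal, f : X → X̃, and let q(y|f(x)) denote the posterior of the pushforward. If D_KL(p(y|x) ‖ q(y|f(x))) := ∑_{x,y} p(x,y) log₂( p(y|x) / q(y|f(x)) ) ≤ (2/ln 2)·δ², then R*_{f(X)} − R*_X ≤ δ. -/
open Finset

/-- Conditional KL divergence (in bits) between the posterior of `p` and the
posterior of the pushforward of `p` under `f`. -/
noncomputable def klPosterior {X X' : Type*} [Fintype X] [DecidableEq X']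
    (p : X → Bool → ℝ) (f : X → X') : ℝ :=
  ∑ x, ∑ y, p x y * Real.logb 2 (condP p x y / condP (pushforward f p) (f x) y)

/-- The auxiliary function in the proof of binary Pinsker. -/
noncomputable def pinskerF (a : ℝ) (t : ℝ) : ℝ :=
  a * Real.log a + (1 - a) * Real.log (1 - a)
    - a * Real.log t - (1 - a) * Real.log (1 - t) - 2 * (a - t) ^ 2

lemma pinskerF_hasDerivAt (a : ℝ) {t : ℝ} (ht0 : 0 < t) (ht1 : t < 1) :
    HasDerivAt (pinskerF a) ((t - a) * (1 - 4 * (t * (1 - t))) / (t * (1 - t))) t := by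
  have h1 : HasDerivAt (fun t : ℝ => a * Real.log t) (a / t) t := by
    simpa [div_eq_mul_inv] using (Real.hasDerivAt_log (ne_of_gt ht0)).const_mul a
  have h2 : HasDerivAt (fun t : ℝ => (1 - a) * Real.log (1 - t))
      ((1 - a) * ((-1) / (1 - t))) t := by
    have hs : HasDerivAt (fun t : ℝ => 1 - t) (-1) t := by
      simpa using (hasDerivAt_id t).const_sub 1
    exact (hs.log (by linarith)).const_mul (1 - a)
  have h3 : HasDerivAt (fun t : ℝ => 2 * (a - t) ^ 2) (2 * (2 * (a - t) * (-1))) t := by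
    have hs : HasDerivAt (fun t : ℝ => a - t) (-1) t := by
      simpa using (hasDerivAt_id t).const_sub a
    exact (hs.pow 2).const_mul 2 |>.congr_deriv (by ring)
  have := (((hasDerivAt_const t (a * Real.log a + (1 - a) * Real.log (1 - a))).sub h1).sub
    h2).sub h3
  refine this.congr_deriv ?_
  have ht : t ≠ 0 := ne_of_gt ht0
  have ht1' : (1 : ℝ) - t ≠ 0 := by linarith
  field_simp
  ring

lemma pinskerF_self (a : ℝ) : pinskerF a a = 0 := by
  simp [pinskerF]

lemma pinskerF_nonneg {a b : ℝ} (ha0 : 0 ≤ a) (ha1 : a ≤ 1) (hb0 : 0 < b) (hb1 : b < 1) :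
    0 ≤ pinskerF a b := by
  rcases le_total a b with hab | hab
  · -- monotone on [a, b]
    have hmono : MonotoneOn (pinskerF a) (Set.Icc a b) := by
      apply monotoneOn_of_deriv_nonneg (convex_Icc a b)
      · -- continuity
        apply ContinuousOn.sub
        apply ContinuousOn.sub
        apply ContinuousOn.sub
        · exact continuousOn_const
        · rcases eq_or_lt_of_le ha0 with h | h
          · simp only [← h, zero_mul]; exact continuousOn_const
          · exact continuousOn_const.mul (Real.continuousOn_log.mono
              (fun t htm => ne_of_gt (lt_of_lt_of_le h htm.1)))
        · refine continuousOn_const.mul (Real.continuousOn_log.comp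
            ((continuous_const.sub continuous_id).continuousOn) ?_)
          intro t htm
          have h2 : t ≤ b := htm.2
          simp only [Set.mem_compl_iff, Set.mem_singleton_iff]
          intro h; linarith
        · exact (continuous_const.mul ((continuous_const.sub continuous_id).pow 2)).continuousOn
      · intro t htm
        rw [interior_Icc] at htm
        have ht0 : 0 < t := lt_of_le_of_lt ha0 htm.1
        have ht1 : t < 1 := lt_of_lt_of_le htm.2 (le_of_lt hb1)
        exact (pinskerF_hasDerivAt a ht0 ht1).differentiableAt.differentiableWithinAt
      · intro t htm
        rw [interior_Icc] at htm
        have ht0 : 0 < t := lt_of_le_of_lt ha0 htm.1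
        have ht1 : t < 1 := lt_of_lt_of_le htm.2 (le_of_lt hb1)
        rw [(pinskerF_hasDerivAt a ht0 ht1).deriv]
        apply div_nonneg
        · apply mul_nonneg (by linarith [htm.1])
          nlinarith [sq_nonneg (2 * t - 1)]
        · nlinarith
    have := hmono (Set.left_mem_Icc.2 hab) (Set.right_mem_Icc.2 hab) hab
    rwa [pinskerF_self] at this
  · -- antitone on [b, a]
    have ha0' : 0 < a := lt_of_lt_of_le hb0 hab
    have hanti : AntitoneOn (pinskerF a) (Set.Icc b a) := by
      apply antitoneOn_of_deriv_nonpos (convex_Icc b a)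
      · apply ContinuousOn.sub
        apply ContinuousOn.sub
        apply ContinuousOn.sub
        · exact continuousOn_const
        · exact continuousOn_const.mul (Real.continuousOn_log.mono
            (fun t htm => ne_of_gt (lt_of_lt_of_le hb0 htm.1)))
        · rcases eq_or_lt_of_le ha1 with h | h
          · simp only [h, sub_self, zero_mul]; exact continuousOn_const
          · refine continuousOn_const.mul (Real.continuousOn_log.comp
              ((continuous_const.sub continuous_id).continuousOn) ?_)
            intro t htm
            have h2 : t ≤ a := htm.2
            simp only [Set.mem_compl_iff, Set.mem_singleton_iff]
            intro hh; linarith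
        · exact (continuous_const.mul ((continuous_const.sub continuous_id).pow 2)).continuousOn
      · intro t htm
        rw [interior_Icc] at htm
        have ht0 : 0 < t := lt_trans hb0 htm.1
        have ht1 : t < 1 := lt_of_lt_of_le htm.2 ha1
        exact (pinskerF_hasDerivAt a ht0 ht1).differentiableAt.differentiableWithinAt
      · intro t htm
        rw [interior_Icc] at htm
        have ht0 : 0 < t := lt_trans hb0 htm.1
        have ht1 : t < 1 := lt_of_lt_of_le htm.2 ha1
        rw [(pinskerF_hasDerivAt a ht0 ht1).deriv]
        apply div_nonpos_of_nonpos_of_nonneg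
        · apply mul_nonpos_of_nonpos_of_nonneg (by linarith [htm.2])
          nlinarith [sq_nonneg (2 * t - 1)]
        · nlinarith
    have := hanti (Set.left_mem_Icc.2 hab) (Set.right_mem_Icc.2 hab) hab
    rwa [pinskerF_self] at this

/-- Binary Pinsker inequality (natural log). -/
lemma pinsker_bin {a b : ℝ} (ha0 : 0 ≤ a) (ha1 : a ≤ 1) (hb0 : 0 < b) (hb1 : b < 1) :
    2 * (a - b) ^ 2 ≤ a * Real.log (a / b) + (1 - a) * Real.log ((1 - a) / (1 - b)) := by
  have h1 : a * Real.log (a / b) = a * Real.log a - a * Real.log b := by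
    rcases eq_or_lt_of_le ha0 with h | h
    · simp [← h]
    · rw [Real.log_div (ne_of_gt h) (ne_of_gt hb0)]; ring
  have h2 : (1 - a) * Real.log ((1 - a) / (1 - b))
      = (1 - a) * Real.log (1 - a) - (1 - a) * Real.log (1 - b) := by
    rcases eq_or_lt_of_le ha1 with h | h
    · simp [h]
    · rw [Real.log_div (by linarith) (by linarith)]; ring
  have := pinskerF_nonneg ha0 ha1 hb0 hb1
  unfold pinskerF at this
  linarith


/-- max of a binary posterior is 1-Lipschitz in the parameter. -/
lemma max_post_sub_le (a b : ℝ) : max (1 - a) a - max (1 - b) b ≤ |a - b| := by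
  have h1 : a - b ≤ |a - b| := le_abs_self _
  have h2 : b - a ≤ |a - b| := by rw [abs_sub_comm]; exact le_abs_self _
  have : max (1 - a) a ≤ max (1 - b) b + |a - b| := by
    apply max_le
    · have := le_max_left (1 - b) b; linarith
    · have := le_max_right (1 - b) b; linarith
  linarith


/-- If the conditional KL divergence is at most `(2/ln 2) δ²`, then `f` is δ-safe. -/
theorem deltaSafe_of_klPosterior_le {X X' : Type*} [Fintype X] [Fintype X'] [DecidableEq X']
    (p : X → Bool → ℝ) (hp : ∀ x y, 0 ≤ p x y) (hsum : ∑ x, ∑ y, p x y = 1)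
    (hfull : ∀ x, 0 < marg p x) (f : X → X') (δ : ℝ) (hδ : 0 ≤ δ)
    (hkl : klPosterior p f ≤ (2 / Real.log 2) * δ ^ 2) :
    bayesError (pushforward f p) - bayesError p ≤ δ := by
  classical
  have hwne : ∀ x, marg p x ≠ 0 := fun x => ne_of_gt (hfull x)
  -- posteriors of p
  have hpt : ∀ x, p x true = marg p x * condP p x true := by
    intro x
    simp only [condP, if_neg (hwne x)]
    rw [mul_comm, div_mul_cancel₀ _ (hwne x)]
  have hcf : ∀ x, condP p x false = 1 - condP p x true := by
    intro x
    simp only [condP, if_neg (hwne x)]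
    have hm : marg p x = p x false + p x true := rfl
    rw [eq_sub_iff_add_eq, ← add_div, ← hm, div_self (hwne x)]
  have hpf : ∀ x, p x false = marg p x * (1 - condP p x true) := by
    intro x
    rw [← hcf x]
    simp only [condP, if_neg (hwne x)]
    rw [mul_comm, div_mul_cancel₀ _ (hwne x)]
  have ha0 : ∀ x, 0 ≤ condP p x true := by
    intro x
    simp only [condP, if_neg (hwne x)]
    exact div_nonneg (hp x true) (hfull x).le
  have ha1 : ∀ x, condP p x true ≤ 1 := by
    intro x
    have h0 : 0 ≤ condP p x false := by
      simp only [condP, if_neg (hwne x)]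
      exact div_nonneg (hp x false) (hfull x).le
    rw [hcf x] at h0; linarith
  -- facts about the pushforward
  have hqnn : ∀ x' y, 0 ≤ pushforward f p x' y :=
    fun x' y => Finset.sum_nonneg fun z _ => hp z y
  have hmargq : ∀ x', marg (pushforward f p) x'
      = ∑ z ∈ Finset.univ.filter (fun z => f z = x'), marg p z := by
    intro x'
    simp only [marg, pushforward, ← Finset.sum_add_distrib]
  have hmq : ∀ x, 0 < marg (pushforward f p) (f x) := by
    intro x
    rw [hmargq]
    exact Finset.sum_pos' (fun z _ => (hfull z).le)
      ⟨x, by simp, hfull x⟩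
  have hmqne : ∀ x, marg (pushforward f p) (f x) ≠ 0 := fun x => ne_of_gt (hmq x)
  have hb0 : ∀ x, 0 ≤ condP (pushforward f p) (f x) true := by
    intro x
    simp only [condP, if_neg (hmqne x)]
    exact div_nonneg (hqnn _ true) (hmq x).le
  have hcfq : ∀ x, condP (pushforward f p) (f x) false
      = 1 - condP (pushforward f p) (f x) true := by
    intro x
    simp only [condP, if_neg (hmqne x)]
    have hm : marg (pushforward f p) (f x)
        = pushforward f p (f x) false + pushforward f p (f x) true := rfl
    rw [eq_sub_iff_add_eq, ← add_div, ← hm, div_self (hmqne x)]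
  have hb1 : ∀ x, condP (pushforward f p) (f x) true ≤ 1 := by
    intro x
    have h0 : 0 ≤ condP (pushforward f p) (f x) false := by
      simp only [condP, if_neg (hmqne x)]
      exact div_nonneg (hqnn _ false) (hmq x).le
    rw [hcfq x] at h0; linarith
  -- degenerate posterior cases
  have hbz : ∀ x, condP (pushforward f p) (f x) true = 0 → condP p x true = 0 := by
    intro x h
    simp only [condP, if_neg (hmqne x), div_eq_zero_iff] at h
    have hqt : pushforward f p (f x) true = 0 := by
      rcases h with h | h
      · exact h
      · exact absurd h (hmqne x)
    have hxt : p x true = 0 := by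
      have := (Finset.sum_eq_zero_iff_of_nonneg (fun z _ => hp z true)).1 hqt x (by simp)
      exact this
    simp only [condP, if_neg (hwne x), hxt, zero_div]
  have hbo : ∀ x, condP (pushforward f p) (f x) true = 1 → condP p x true = 1 := by
    intro x h
    have hqf : pushforward f p (f x) false = 0 := by
      have h2 := hcfq x
      rw [h] at h2
      simp only [condP, if_neg (hmqne x), sub_self, div_eq_zero_iff] at h2
      rcases h2 with h2 | h2
      · exact h2
      · exact absurd h2 (hmqne x)
    have hxf : p x false = 0 := by
      have := (Finset.sum_eq_zero_iff_of_nonneg (fun z _ => hp z false)).1 hqf x (by simp)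
      exact this
    have h3 : condP p x false = 0 := by
      simp only [condP, if_neg (hwne x), hxf, zero_div]
    have h4 := hcf x
    rw [h3] at h4
    linarith
  have hlog2 : (0:ℝ) < Real.log 2 := Real.log_pos (by norm_num)
  -- per-point Pinsker bound
  have hkey : ∀ x, 2 * (marg p x *
      (condP p x true - condP (pushforward f p) (f x) true) ^ 2)
      ≤ Real.log 2 *
        ∑ y, p x y * Real.logb 2 (condP p x y / condP (pushforward f p) (f x) y) := by
    intro x
    set A := condP p x true with hA
    set B := condP (pushforward f p) (f x) true with hB
    have hrhs : Real.log 2 *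
        ∑ y, p x y * Real.logb 2 (condP p x y / condP (pushforward f p) (f x) y)
        = marg p x * (A * Real.log (A / B) + (1 - A) * Real.log ((1 - A) / (1 - B))) := by
      rw [Fintype.sum_bool, hcf x, hcfq x, hpt x, hpf x]
      simp only [Real.logb, ← hA, ← hB]
      field_simp
    rw [hrhs]
    by_cases hbe : B = 0
    · have haz : A = 0 := by
        rw [hA]; exact hbz x (by rw [← hB]; exact hbe)
      rw [haz, hbe]
      simp
    by_cases hbe' : B = 1
    · have hao : A = 1 := by
        rw [hA]; exact hbo x (by rw [← hB]; exact hbe')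
      rw [hao, hbe']
      simp
    · have hBp : 0 < B := lt_of_le_of_ne (hb0 x) (Ne.symm hbe)
      have hBl : B < 1 := lt_of_le_of_ne (hb1 x) hbe'
      have hpin := pinsker_bin (ha0 x) (ha1 x) hBp hBl
      calc 2 * (marg p x * (A - B) ^ 2) = marg p x * (2 * (A - B) ^ 2) := by ring
        _ ≤ _ := mul_le_mul_of_nonneg_left hpin (hfull x).le
  -- sum of weights is 1
  have hsum_w : ∑ x, marg p x = 1 := by
    rw [← hsum]
    refine Finset.sum_congr rfl fun x _ => ?_
    rw [Fintype.sum_bool]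
    simp only [marg]
    ring
  -- χ² bound on weighted squared distance
  have hkl2 : ∑ x, marg p x *
      (condP p x true - condP (pushforward f p) (f x) true) ^ 2 ≤ δ ^ 2 := by
    have h1 : 2 * ∑ x, marg p x *
        (condP p x true - condP (pushforward f p) (f x) true) ^ 2
        ≤ Real.log 2 * klPosterior p f := by
      rw [Finset.mul_sum, klPosterior, Finset.mul_sum]
      exact Finset.sum_le_sum fun x _ => hkey x
    have h2 : Real.log 2 * klPosterior p f ≤ 2 * δ ^ 2 := by
      have h3 := mul_le_mul_of_nonneg_left hkl hlog2.le
      calc Real.log 2 * klPosterior p f ≤ Real.log 2 * (2 / Real.log 2 * δ ^ 2) := h3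
        _ = 2 * δ ^ 2 := by field_simp
    linarith
  -- Cauchy–Schwarz
  set S := ∑ x, marg p x *
      |condP p x true - condP (pushforward f p) (f x) true| with hSdef
  have hS0 : 0 ≤ S :=
    Finset.sum_nonneg fun x _ => mul_nonneg (hfull x).le (abs_nonneg _)
  have hCS : S ^ 2 ≤ ∑ x, marg p x *
      (condP p x true - condP (pushforward f p) (f x) true) ^ 2 := by
    have hcs := Finset.sum_mul_sq_le_sq_mul_sq Finset.univ
      (fun x => Real.sqrt (marg p x))
      (fun x => Real.sqrt (marg p x) *
        |condP p x true - condP (pushforward f p) (f x) true|)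
    have e1 : ∑ x, Real.sqrt (marg p x) *
        (Real.sqrt (marg p x) *
          |condP p x true - condP (pushforward f p) (f x) true|) = S := by
      refine Finset.sum_congr rfl fun x _ => ?_
      rw [← mul_assoc, Real.mul_self_sqrt (hfull x).le]
    have e2 : ∑ x, Real.sqrt (marg p x) ^ 2 = 1 := by
      rw [← hsum_w]
      exact Finset.sum_congr rfl fun x _ => Real.sq_sqrt (hfull x).le
    have e3 : ∑ x, (Real.sqrt (marg p x) *
        |condP p x true - condP (pushforward f p) (f x) true|) ^ 2
        = ∑ x, marg p x *
          (condP p x true - condP (pushforward f p) (f x) true) ^ 2 := by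
      refine Finset.sum_congr rfl fun x _ => ?_
      rw [mul_pow, Real.sq_sqrt (hfull x).le, sq_abs]
    rw [e1, e2, e3, one_mul] at hcs
    exact hcs
  have hSδ : S ≤ δ := by
    have hsq : S ^ 2 ≤ δ ^ 2 := hCS.trans hkl2
    nlinarith [hS0, hδ, hsq]
  -- rewrite the two Bayes errors
  have hbp : bayesError p = ∑ x, marg p x *
      (1 - max (1 - condP p x true) (condP p x true)) := by
    unfold bayesError
    exact Finset.sum_congr rfl fun x _ => by rw [hcf x]
  have hbq : bayesError (pushforward f p) = ∑ x, marg p x *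
      (1 - max (1 - condP (pushforward f p) (f x) true)
        (condP (pushforward f p) (f x) true)) := by
    unfold bayesError
    rw [← Finset.sum_fiberwise Finset.univ f (fun x => marg p x *
      (1 - max (1 - condP (pushforward f p) (f x) true)
        (condP (pushforward f p) (f x) true)))]
    refine Finset.sum_congr rfl fun x' _ => ?_
    rw [hmargq x', Finset.sum_mul]
    refine Finset.sum_congr rfl fun z hz => ?_
    have hfz : f z = x' := by simpa using (Finset.mem_filter.1 hz).2
    rw [← hfz, hcfq z]
  -- conclude
  rw [hbp, hbq, ← Finset.sum_sub_distrib]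
  calc ∑ x, (marg p x * (1 - max (1 - condP (pushforward f p) (f x) true)
          (condP (pushforward f p) (f x) true))
        - marg p x * (1 - max (1 - condP p x true) (condP p x true)))
      ≤ ∑ x, marg p x *
        |condP p x true - condP (pushforward f p) (f x) true| := by
        refine Finset.sum_le_sum fun x _ => ?_
        have hmx := max_post_sub_le (condP p x true)
          (condP (pushforward f p) (f x) true)
        have h := mul_le_mul_of_nonneg_left hmx (hfull x).le
        nlinarith [h]
    _ = S := rfl
    _ ≤ δ := hSδ
end

section
/- With finite X, binary Y, posterior η, transformation f : X → X̃, pushforward posterior η_f, and any g : X̃ → ℝ: R*_{f(X)} − R*_X ≤ 2·√(L_{g,X}(f)), where L_{g,X}(f) = E_X[(g(f(X)) − η(X))²]. -/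
open Finset

/-- Weighted Cauchy–Schwarz: `∑ w |a| ≤ √(∑ w a²)` when `∑ w ≤ 1`. -/
lemma weighted_abs_le_sqrt {α : Type*} [Fintype α] (w a : α → ℝ)
    (hw : ∀ i, 0 ≤ w i) (hw1 : ∑ i, w i ≤ 1) :
    ∑ i, w i * |a i| ≤ Real.sqrt (∑ i, w i * a i ^ 2) := by
  have key : (∑ i, w i * |a i|) ^ 2 ≤ ∑ i, w i * a i ^ 2 := by
    have h := sum_mul_sq_le_sq_mul_sq univ (fun i => Real.sqrt (w i))
      (fun i => Real.sqrt (w i) * |a i|)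
    have e1 : ∀ i, Real.sqrt (w i) * (Real.sqrt (w i) * |a i|) = w i * |a i| := by
      intro i
      rw [← mul_assoc, Real.mul_self_sqrt (hw i)]
    have e2 : ∀ i, Real.sqrt (w i) ^ 2 = w i := fun i => Real.sq_sqrt (hw i)
    have e3 : ∀ i, (Real.sqrt (w i) * |a i|) ^ 2 = w i * a i ^ 2 := by
      intro i
      rw [mul_pow, Real.sq_sqrt (hw i), sq_abs]
    simp only [e1, e2, e3] at h
    calc (∑ i, w i * |a i|) ^ 2 ≤ (∑ i, w i) * ∑ i, w i * a i ^ 2 := h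
      _ ≤ 1 * ∑ i, w i * a i ^ 2 := by
          apply mul_le_mul_of_nonneg_right hw1
          exact Finset.sum_nonneg fun i _ => mul_nonneg (hw i) (sq_nonneg _)
      _ = _ := one_mul _
  have h0 : 0 ≤ ∑ i, w i * |a i| :=
    Finset.sum_nonneg fun i _ => mul_nonneg (hw i) (abs_nonneg _)
  calc ∑ i, w i * |a i| = Real.sqrt ((∑ i, w i * |a i|) ^ 2) := (Real.sqrt_sq h0).symm
    _ ≤ Real.sqrt (∑ i, w i * a i ^ 2) := Real.sqrt_le_sqrt key

/-- The increase in Bayes error under `f` is at most `2 √(L_{g,X}(f))`. -/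
theorem bayesError_increase_le_sqrt_loss {X X' : Type*} [Fintype X] [Fintype X']
    [DecidableEq X'] (p : X → Bool → ℝ) (hp : ∀ x y, 0 ≤ p x y)
    (hsum : ∑ x, ∑ y, p x y = 1) (f : X → X') (g : X' → ℝ) :
    bayesError (pushforward f p) - bayesError p ≤
      2 * Real.sqrt (∑ x, marg p x * (g (f x) - condP p x true) ^ 2) := by
  classical
  set q : X' → Bool → ℝ := pushforward f p with hq
  set μ : X → ℝ := marg p with hμdef
  set η : X → ℝ := fun x => condP p x true with hηdef
  set ν : X' → ℝ := marg q with hνdef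
  set ηf : X' → ℝ := fun x' => condP q x' true with hηfdef
  have hμ0 : ∀ x, 0 ≤ μ x := fun x => add_nonneg (hp x false) (hp x true)
  have hq0 : ∀ x' y, 0 ≤ q x' y := fun x' y => Finset.sum_nonneg fun x _ => hp x y
  have hν0 : ∀ x', 0 ≤ ν x' := fun x' => add_nonneg (hq0 x' false) (hq0 x' true)
  have hμsum : ∑ x, μ x = 1 := by
    rw [← hsum]
    refine Finset.sum_congr rfl fun x _ => ?_
    simp [hμdef, marg, Fintype.sum_bool, add_comm]
  -- fiber decomposition of ν
  have hνfiber : ∀ x', ν x' = ∑ x ∈ univ.filter (fun x => f x = x'), μ x := by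
    intro x'
    simp only [hνdef, marg, hq, pushforward, hμdef, ← Finset.sum_add_distrib]
  -- when ν x' = 0, μ x = 0 on the fiber
  have hνzero : ∀ x', ν x' = 0 → ∀ x, f x = x' → μ x = 0 := by
    intro x' h x hx
    have := hνfiber x'
    rw [h] at this
    have := (Finset.sum_eq_zero_iff_of_nonneg (fun i _ => hμ0 i)).1 this.symm
    exact this x (by simp [hx])
  -- p x true = μ x * η x
  have hptrue : ∀ x, p x true = μ x * η x := by
    intro x
    by_cases h : μ x = 0
    · have : p x false + p x true = 0 := h
      have h1 : p x true = 0 := by linarith [hp x false, hp x true]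
      simp [h1, h]
    · simp only [hηdef, condP, ← hμdef, h, if_neg h]
      field_simp
  have hqtrue : ∀ x', q x' true = ν x' * ηf x' := by
    intro x'
    by_cases h : ν x' = 0
    · have : q x' false + q x' true = 0 := h
      have h1 : q x' true = 0 := by linarith [hq0 x' false, hq0 x' true]
      simp [h1, h]
    · simp only [hηfdef, condP, ← hνdef, h, if_neg h]
      field_simp
  -- ν x' * ηf x' = ∑ fiber μ x * η x
  have hνηf : ∀ x', ν x' * ηf x' = ∑ x ∈ univ.filter (fun x => f x = x'), μ x * η x := by
    intro x'
    rw [← hqtrue]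
    simp only [hq, pushforward]
    exact Finset.sum_congr rfl fun x _ => hptrue x
  -- η and ηf are in [0,1]
  have hηmem : ∀ x, 0 ≤ η x ∧ η x ≤ 1 := by
    intro x
    simp only [hηdef, condP, ← hμdef]
    by_cases h : μ x = 0
    · simp [h]
    · rw [if_neg h]
      have hpos : 0 < μ x := lt_of_le_of_ne (hμ0 x) (Ne.symm h)
      constructor
      · exact div_nonneg (hp x true) (hμ0 x)
      · rw [div_le_one hpos]
        have := hp x false
        simp only [hμdef, marg]; linarith
  have hcond01 : ∀ (r : X → Bool → ℝ), (∀ x y, 0 ≤ r x y) → ∀ x y,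
      0 ≤ condP r x y ∧ condP r x y ≤ 1 := by
    intro r hr x y
    simp only [condP]
    by_cases h : marg r x = 0
    · simp [h]
    · rw [if_neg h]
      have hm0 : 0 ≤ marg r x := add_nonneg (hr x false) (hr x true)
      have hpos : 0 < marg r x := lt_of_le_of_ne hm0 (Ne.symm h)
      refine ⟨div_nonneg (hr x y) hm0, ?_⟩
      rw [div_le_one hpos]
      cases y
      · have := hr x true; simp only [marg]; linarith
      · have := hr x false; simp only [marg]; linarith
  have hcfalse : ∀ x, μ x ≠ 0 → condP p x false = 1 - η x := by
    intro x h
    simp only [hηdef, condP, ← hμdef, if_neg h]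
    field_simp
    simp [hμdef, marg]
  have hqfalse : ∀ x', ν x' ≠ 0 → condP q x' false = 1 - ηf x' := by
    intro x' h
    simp only [hηfdef, condP, ← hνdef, if_neg h]
    field_simp
    simp [hνdef, marg]
  -- Step A: bayesError q - bayesError p ≤ ∑ μ |η - ηf∘f|
  have stepA : bayesError q - bayesError p ≤ ∑ x, μ x * |η x - ηf (f x)| := by
    rw [sub_le_iff_le_add, add_comm]
    have hre : bayesError p + ∑ x, μ x * |η x - ηf (f x)| =
        ∑ x, (μ x * (1 - max (condP p x false) (condP p x true)) + μ x * |η x - ηf (f x)|) := by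
      rw [bayesError, ← Finset.sum_add_distrib]
    rw [hre, ← Finset.sum_fiberwise_of_maps_to (g := f) (fun x _ => Finset.mem_univ (f x))]
    rw [bayesError]
    apply Finset.sum_le_sum
    intro x' _
    by_cases h : ν x' = 0
    · have hL : marg q x' * (1 - max (condP q x' false) (condP q x' true)) = 0 := by
        rw [← hνdef, h, zero_mul]
      rw [hL]
      apply Finset.sum_nonneg
      intro x hx
      have h1 : max (condP p x false) (condP p x true) ≤ 1 :=
        max_le (hcond01 p hp x false).2 (hcond01 p hp x true).2
      have := mul_nonneg (hμ0 x) (by linarith : (0:ℝ) ≤ 1 - max (condP p x false) (condP p x true))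
      have := mul_nonneg (hμ0 x) (abs_nonneg (η x - ηf (f x)))
      linarith
    · rw [← hνdef, hνfiber x', Finset.sum_mul]
      apply Finset.sum_le_sum
      intro x hx
      have hfx : f x = x' := by simpa using hx
      by_cases hmx : μ x = 0
      · simp [hmx]
      · rw [hcfalse x hmx, hqfalse x' h, hfx]
        have key : max (1 - η x) (η x) - max (1 - ηf x') (ηf x') ≤ |η x - ηf x'| := by
          have h1 : |max (1 - η x) (η x) - max (1 - ηf x') (ηf x')| ≤
              max |(1 - η x) - (1 - ηf x')| |η x - ηf x'| :=
            abs_max_sub_max_le_max _ _ _ _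
          have h2 : |(1 - η x) - (1 - ηf x')| = |η x - ηf x'| := by
            rw [← abs_neg]; ring_nf
          rw [h2, max_self] at h1
          exact le_trans (le_abs_self _) h1
        have hμx : 0 ≤ μ x := hμ0 x
        nlinarith [abs_nonneg (η x - ηf x')]
  -- Step B: triangle inequality
  have stepB : ∑ x, μ x * |η x - ηf (f x)| ≤
      ∑ x, μ x * |g (f x) - η x| + ∑ x, μ x * |g (f x) - ηf (f x)| := by
    rw [← Finset.sum_add_distrib]
    apply Finset.sum_le_sum
    intro x _
    rw [← mul_add]
    apply mul_le_mul_of_nonneg_left _ (hμ0 x)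
    calc |η x - ηf (f x)| ≤ |η x - g (f x)| + |g (f x) - ηf (f x)| := abs_sub_le _ _ _
      _ = |g (f x) - η x| + |g (f x) - ηf (f x)| := by rw [abs_sub_comm]
  -- define L
  set L : ℝ := ∑ x, μ x * (g (f x) - η x) ^ 2 with hLdef
  -- Step C: ∑ μ |g∘f - η| ≤ √L
  have stepC : ∑ x, μ x * |g (f x) - η x| ≤ Real.sqrt L :=
    weighted_abs_le_sqrt μ (fun x => g (f x) - η x) hμ0 (le_of_eq hμsum)
  -- Step D (contraction): ∑ μ (g∘f - ηf∘f)² ≤ L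
  have contraction : ∑ x, μ x * (g (f x) - ηf (f x)) ^ 2 ≤ L := by
    rw [← Finset.sum_fiberwise_of_maps_to (g := f) (fun x _ => Finset.mem_univ (f x))
      (fun x => μ x * (g (f x) - ηf (f x)) ^ 2), hLdef,
      ← Finset.sum_fiberwise_of_maps_to (g := f) (fun x _ => Finset.mem_univ (f x))
      (fun x => μ x * (g (f x) - η x) ^ 2)]
    apply Finset.sum_le_sum
    intro x' _
    have heq : ∑ x ∈ univ.filter (fun x => f x = x'), μ x * (g (f x) - ηf (f x)) ^ 2 =
        ν x' * (g x' - ηf x') ^ 2 := by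
      rw [hνfiber, Finset.sum_mul]
      refine Finset.sum_congr rfl fun x hx => ?_
      have hfx : f x = x' := by simpa using hx
      rw [hfx]
    rw [heq]
    have heq2 : ∀ x ∈ univ.filter (fun x => f x = x'), μ x * (g (f x) - η x) ^ 2 =
        μ x * (g x' - η x) ^ 2 := by
      intro x hx
      have hfx : f x = x' := by simpa using hx
      rw [hfx]
    rw [Finset.sum_congr rfl heq2]
    by_cases h : ν x' = 0
    · rw [h, zero_mul]
      exact Finset.sum_nonneg fun x _ => mul_nonneg (hμ0 x) (sq_nonneg _)
    · have hpos : 0 < ν x' := lt_of_le_of_ne (hν0 x') (Ne.symm h)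
      rw [← mul_le_mul_iff_right₀ hpos]
      have hcs := sum_mul_sq_le_sq_mul_sq (univ.filter (fun x => f x = x'))
        (fun x => Real.sqrt (μ x)) (fun x => Real.sqrt (μ x) * (g x' - η x))
      have e1 : ∀ x, Real.sqrt (μ x) * (Real.sqrt (μ x) * (g x' - η x)) =
          μ x * (g x' - η x) := by
        intro x; rw [← mul_assoc, Real.mul_self_sqrt (hμ0 x)]
      have e2 : ∀ x, Real.sqrt (μ x) ^ 2 = μ x := fun x => Real.sq_sqrt (hμ0 x)
      have e3 : ∀ x, (Real.sqrt (μ x) * (g x' - η x)) ^ 2 = μ x * (g x' - η x) ^ 2 := by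
        intro x; rw [mul_pow, Real.sq_sqrt (hμ0 x)]
      simp only [e1, e2, e3] at hcs
      have hsumeq : ∑ x ∈ univ.filter (fun x => f x = x'), μ x * (g x' - η x) =
          ν x' * (g x' - ηf x') := by
        have : ∀ x, μ x * (g x' - η x) = μ x * g x' - μ x * η x := fun x => by ring
        simp only [this, Finset.sum_sub_distrib, ← Finset.sum_mul, ← hνfiber, ← hνηf]
        ring
      rw [hsumeq, ← hνfiber] at hcs
      calc ν x' * (ν x' * (g x' - ηf x') ^ 2) = (ν x' * (g x' - ηf x')) ^ 2 := by ring
        _ ≤ ν x' * ∑ x ∈ univ.filter (fun x => f x = x'), μ x * (g x' - η x) ^ 2 := hcs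
  -- Step D': ∑ μ |g∘f - ηf∘f| ≤ √L
  have stepD : ∑ x, μ x * |g (f x) - ηf (f x)| ≤ Real.sqrt L := by
    calc ∑ x, μ x * |g (f x) - ηf (f x)|
        ≤ Real.sqrt (∑ x, μ x * (g (f x) - ηf (f x)) ^ 2) :=
          weighted_abs_le_sqrt μ (fun x => g (f x) - ηf (f x)) hμ0 (le_of_eq hμsum)
      _ ≤ Real.sqrt L := Real.sqrt_le_sqrt contraction
  calc bayesError q - bayesError p ≤ ∑ x, μ x * |η x - ηf (f x)| := stepA
    _ ≤ ∑ x, μ x * |g (f x) - η x| + ∑ x, μ x * |g (f x) - ηf (f x)| := stepB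
    _ ≤ Real.sqrt L + Real.sqrt L := add_le_add stepC stepD
    _ = 2 * Real.sqrt L := by ring
end

section
/- Under the same setup: R*_{f(X)} − R*_X ≤ E_X |η(X) − η_f(f(X))|, i.e. the increase in Bayes error under a transformation is bounded by the expected absolute deviation between the original posterior and the transformed-space posterior. -/
open Finset

lemma min_lip (a b : ℝ) : min b (1-b) - min a (1-a) ≤ |a - b| := by
  rcases abs_cases (a-b) with ⟨h1,h2⟩|⟨h1,h2⟩ <;> simp only [min_def] <;>
    split_ifs <;> linarith

lemma condP_false {X : Type*} (p : X → Bool → ℝ) (x : X) (hm : marg p x ≠ 0) :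
    condP p x false = 1 - condP p x true := by
  have : p x false + p x true = marg p x := rfl
  rw [condP, condP, if_neg hm, if_neg hm, eq_sub_iff_add_eq, ← add_div, this, div_self hm]

/-- The increase in Bayes error under a transformation is bounded by the expected
absolute deviation between the original and transformed-space posteriors. -/
theorem bayesError_increase_le_expected_deviation {X X' : Type*} [Fintype X] [Fintype X']
    [DecidableEq X'] (p : X → Bool → ℝ) (hp : ∀ x y, 0 ≤ p x y)
    (hsum : ∑ x, ∑ y, p x y = 1) (f : X → X') :
    bayesError (pushforward f p) - bayesError p ≤
      ∑ x, marg p x * |condP p x true - condP (pushforward f p) (f x) true| := by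
  set q := pushforward f p with hqdef
  have hmnn : ∀ x, (0:ℝ) ≤ marg p x := fun x => add_nonneg (hp x false) (hp x true)
  have hmargq : ∀ x', marg q x' = ∑ x ∈ Finset.univ.filter (fun x => f x = x'), marg p x := by
    intro x'
    simp [marg, hqdef, pushforward, Finset.sum_add_distrib]
  have hq : bayesError q =
      ∑ x, marg p x * (1 - max (condP q (f x) false) (condP q (f x) true)) := by
    unfold bayesError
    rw [← Finset.sum_fiberwise Finset.univ f
      (fun x => marg p x * (1 - max (condP q (f x) false) (condP q (f x) true)))]
    refine Finset.sum_congr rfl fun x' _ => ?_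
    rw [Finset.sum_congr rfl (fun x hx => by
      rw [(Finset.mem_filter.mp hx).2]), ← Finset.sum_mul, ← hmargq]
  rw [hq, bayesError, ← Finset.sum_sub_distrib]
  apply Finset.sum_le_sum
  intro x _
  by_cases hm : marg p x = 0
  · simp [hm]
  · have hmq : marg q (f x) ≠ 0 := by
      have hle : marg p x ≤ marg q (f x) := by
        rw [hmargq]
        exact Finset.single_le_sum (fun i _ => hmnn i)
          (Finset.mem_filter.mpr ⟨Finset.mem_univ x, rfl⟩)
      have := lt_of_lt_of_le (lt_of_le_of_ne (hmnn x) (Ne.symm hm)) hle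
      linarith
    rw [condP_false p x hm, condP_false q (f x) hmq]
    set a := condP p x true
    set b := condP q (f x) true
    have hmax : ∀ t : ℝ, 1 - max (1-t) t = min t (1-t) := by
      intro t
      rcases le_total t (1-t) with h | h <;> simp [max_def, min_def] <;> split_ifs <;> linarith
    rw [hmax, hmax]
    have h1 := min_lip a b
    nlinarith [hmnn x, abs_nonneg (a - b)]
end

section
/- Let g : X → ℝ be L-Lipschitz, X, X' i.i.d. random variables on a metric space, η : X → [0,1] measurable, and let L_{g,X}(id) = E[(g(X) − η(X))²]. Then for any ε > 0, P(|η(X) − η(X')| ≤ ε + L·d(X,X')) ≥ 1 − 8·L_{g,X}(id)/ε². That is, η is (ε, 8L_{g,X}(id)/ε², L)-probably Lipschitz. -/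
open MeasureTheory

/-- If `g` is `L`-Lipschitz and `E[(g(X) - η(X))²] = V`, then `η` is
`(ε, 8V/ε², L)`-probably Lipschitz for `X, X'` i.i.d. -/
theorem probably_lipschitz {α : Type*} [MetricSpace α] [MeasurableSpace α] [BorelSpace α]
    (μ : Measure α) [IsProbabilityMeasure μ] (g η : α → ℝ) (L : NNReal)
    (hg : LipschitzWith L g) (hη : Measurable η) (hη01 : ∀ x, η x ∈ Set.Icc (0 : ℝ) 1)
    (hint : Integrable (fun x => (g x - η x) ^ 2) μ) (ε : ℝ) (hε : 0 < ε) :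
    ENNReal.ofReal (1 - 8 * (∫ x, (g x - η x) ^ 2 ∂μ) / ε ^ 2) ≤
      (μ.prod μ) {q : α × α | |η q.1 - η q.2| ≤ ε + L * dist q.1 q.2} := by
  set V : ℝ := ∫ x, (g x - η x) ^ 2 ∂μ with hV
  have hVnn : 0 ≤ V := integral_nonneg fun x => sq_nonneg _
  set b : ℝ := 4 * V / ε ^ 2 with hb
  have hbnn : 0 ≤ b := by positivity
  -- the good set
  set G : Set α := {x | |g x - η x| ≤ ε / 2} with hG
  have hGm : MeasurableSet G := by
    have : Measurable g := hg.continuous.measurable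
    exact measurableSet_le ((this.sub hη).abs) measurable_const
  -- Markov bound on the complement
  have hmarkov : μ Gᶜ ≤ ENNReal.ofReal b := by
    have hsub : Gᶜ ⊆ {x | (ε / 2) ^ 2 ≤ (g x - η x) ^ 2} := by
      intro x hx
      simp only [hG, Set.mem_compl_iff, Set.mem_setOf_eq, not_le] at hx ⊢
      calc (ε / 2) ^ 2 ≤ |g x - η x| ^ 2 := by
            apply pow_le_pow_left₀ (by positivity) hx.le
        _ = (g x - η x) ^ 2 := sq_abs _
    have hmark := mul_meas_ge_le_integral_of_nonneg
      (Filter.Eventually.of_forall fun x => sq_nonneg (g x - η x)) hint ((ε / 2) ^ 2)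
    have hfin : μ {x | (ε / 2) ^ 2 ≤ (g x - η x) ^ 2} ≠ ⊤ := measure_ne_top _ _
    have htoReal : (μ {x | (ε / 2) ^ 2 ≤ (g x - η x) ^ 2}).toReal ≤ b := by
      rw [← hV] at hmark
      rw [hb, le_div_iff₀ (by positivity : (0:ℝ) < ε ^ 2)]
      rw [measureReal_def] at hmark
      nlinarith [hmark]
    calc μ Gᶜ ≤ μ {x | (ε / 2) ^ 2 ≤ (g x - η x) ^ 2} := measure_mono hsub
      _ = ENNReal.ofReal (μ {x | (ε / 2) ^ 2 ≤ (g x - η x) ^ 2}).toReal := by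
          rw [ENNReal.ofReal_toReal hfin]
      _ ≤ ENNReal.ofReal b := ENNReal.ofReal_le_ofReal htoReal
  -- lower bound on μ G
  have hGlow : ENNReal.ofReal (1 - b) ≤ μ G := by
    have h1 : μ G = 1 - μ Gᶜ := by
      have := measure_add_measure_compl hGm (μ := μ)
      rw [measure_univ] at this
      rw [← this]
      simp [ENNReal.add_sub_cancel_right (measure_ne_top μ Gᶜ)]
    rw [h1, ENNReal.ofReal_sub _ hbnn, ENNReal.ofReal_one]
    exact tsub_le_tsub_left hmarkov 1
  -- G ×ˢ G is contained in the target set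
  have hsub2 : G ×ˢ G ⊆ {q : α × α | |η q.1 - η q.2| ≤ ε + L * dist q.1 q.2} := by
    rintro ⟨x, y⟩ ⟨hx, hy⟩
    simp only [hG, Set.mem_setOf_eq] at hx hy ⊢
    have hgd : |g x - g y| ≤ L * dist x y := by
      have := hg.dist_le_mul x y
      rwa [Real.dist_eq] at this
    calc |η x - η y| = |(η x - g x) + (g x - g y) + (g y - η y)| := by ring_nf
      _ ≤ |η x - g x| + |g x - g y| + |g y - η y| := by
          exact (abs_add_le _ _).trans (add_le_add_left (abs_add_le _ _) _)
      _ ≤ ε / 2 + (L * dist x y) + ε / 2 := by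
          rw [abs_sub_comm (η x), abs_sub_comm (g y)] at *
          exact add_le_add (add_le_add hx hgd) hy
      _ = ε + L * dist x y := by ring
  have h2b : 1 - 8 * V / ε ^ 2 = 1 - 2 * b := by rw [hb]; ring
  rw [h2b]
  rcases le_or_gt (1 - 2 * b) 0 with h0 | h0
  · rw [ENNReal.ofReal_eq_zero.mpr h0]; exact zero_le
  have hb1 : b ≤ 1 := by linarith
  calc ENNReal.ofReal (1 - 2 * b)
      ≤ ENNReal.ofReal ((1 - b) ^ 2) := by
        apply ENNReal.ofReal_le_ofReal; nlinarith [sq_nonneg b]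
    _ = ENNReal.ofReal (1 - b) * ENNReal.ofReal (1 - b) := by
        rw [sq, ENNReal.ofReal_mul (by linarith)]
    _ ≤ μ G * μ G := mul_le_mul' hGlow hGlow
    _ = (μ.prod μ) (G ×ˢ G) := (Measure.prod_prod G G).symm
    _ ≤ _ := measure_mono hsub2
end
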